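/- arXiv:2201.06327 — 3 statements merged into one kernel-verified Lean document; each statement's English description precedes it below -/
import Mathlib

section
/- Let γ be a standard Gaussian vector in R^p and B a symmetric p×p matrix. Then Var(⟨Bγ,γ⟩²) = 8 (tr B)² tr(B²) + 32 (tr B) tr(B³) + 48 tr(B⁴) + 8 (tr B²)². -/
open MeasureTheory ProbabilityTheory Matrix Real Filter

noncomputable def Gm (n : ℕ) : ℝ := ∫ x : ℝ, x ^ n ∂(gaussianReal 0 1)

lemma integrable_pow_exp (n : ℕ) :
    Integrable (fun x : ℝ => x ^ n * rexp (-x ^ 2 / 2)) := by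
  have h := integrable_rpow_mul_exp_neg_mul_sq (b := 1/2) (by norm_num) (s := n)
    (lt_of_lt_of_le neg_one_lt_zero (Nat.cast_nonneg n))
  simp only [Real.rpow_natCast] at h
  convert h using 2 with x
  ring_nf

lemma gaussianPDFReal_zero_one (x : ℝ) :
    gaussianPDFReal 0 1 x = (Real.sqrt (2 * π))⁻¹ * rexp (-x ^ 2 / 2) := by
  simp [gaussianPDFReal, sub_zero]

lemma integral_gaussianReal_eq (f : ℝ → ℝ) :
    ∫ x, f x ∂(gaussianReal 0 1)
      = (Real.sqrt (2 * π))⁻¹ * ∫ x, f x * rexp (-x ^ 2 / 2) := by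
  rw [gaussianReal_of_var_ne_zero 0 one_ne_zero]
  have hm : Measurable fun x => (gaussianPDFReal 0 1 x).toNNReal :=
    (measurable_gaussianPDFReal 0 1).real_toNNReal
  rw [show gaussianPDF 0 1 = fun x => ((gaussianPDFReal 0 1 x).toNNReal : ENNReal) from rfl]
  rw [integral_withDensity_eq_integral_smul hm]
  simp only [NNReal.smul_def, smul_eq_mul,
    Real.coe_toNNReal _ (gaussianPDFReal_nonneg 0 1 _)]
  rw [← integral_const_mul]
  congr 1 with x
  rw [gaussianPDFReal_zero_one]
  ring

lemma integrable_pow_gaussian (n : ℕ) :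
    Integrable (fun x : ℝ => x ^ n) (gaussianReal 0 1) := by
  rw [gaussianReal_of_var_ne_zero 0 one_ne_zero]
  have hm : Measurable fun x => (gaussianPDFReal 0 1 x).toNNReal :=
    (measurable_gaussianPDFReal 0 1).real_toNNReal
  rw [show gaussianPDF 0 1 = fun x => ((gaussianPDFReal 0 1 x).toNNReal : ENNReal) from rfl]
  rw [integrable_withDensity_iff_integrable_smul hm]
  simp only [NNReal.smul_def, smul_eq_mul,
    Real.coe_toNNReal _ (gaussianPDFReal_nonneg 0 1 _)]
  have : Integrable (fun x : ℝ => (Real.sqrt (2*π))⁻¹ * (x ^ n * rexp (-x ^ 2 / 2))) :=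
    (integrable_pow_exp n).const_mul _
  apply this.congr
  filter_upwards with x
  rw [gaussianPDFReal_zero_one]
  ring

lemma Gm_zero : Gm 0 = 1 := by
  simp [Gm]

lemma Gm_one : Gm 1 = 0 := by
  rw [Gm, integral_gaussianReal_eq]
  have h : ∫ x : ℝ, x ^ 1 * rexp (-x ^ 2 / 2) = 0 := by
    have h1 := MeasureTheory.integral_neg_eq_self (fun x : ℝ => x ^ 1 * rexp (-x ^ 2 / 2))
      (volume : Measure ℝ)
    have h2 : ∫ x : ℝ, (fun x : ℝ => x ^ 1 * rexp (-x ^ 2 / 2)) (-x)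
        = - ∫ x : ℝ, x ^ 1 * rexp (-x ^ 2 / 2) := by
      rw [← integral_neg]; congr 1 with x; simp only [neg_sq]; ring
    linarith [h1, h2]
  rw [h, mul_zero]

lemma J_rec (n : ℕ) : ∫ x : ℝ, x ^ (n + 2) * rexp (-x ^ 2 / 2)
    = (n + 1 : ℝ) * ∫ x : ℝ, x ^ n * rexp (-x ^ 2 / 2) := by
  have hv : ∀ x : ℝ, HasDerivAt (fun y : ℝ => rexp (-y ^ 2 / 2))
      (rexp (-x ^ 2 / 2) * -x) x := by
    intro x
    have e : (fun y : ℝ => -y ^ 2 / 2) = fun y : ℝ => -(y ^ 2 / 2) := by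
      funext y; ring
    have h1 : HasDerivAt (fun y : ℝ => -(y ^ 2 / 2)) (-x) x := by
      have := (((hasDerivAt_pow 2 x)).div_const 2).neg
      simp at this
      exact this
    simpa only [neg_div] using h1.exp
  have hu : ∀ x : ℝ, HasDerivAt (fun y : ℝ => y ^ (n + 1))
      (((n : ℝ) + 1) * x ^ n) x := by
    intro x
    simpa using hasDerivAt_pow (n + 1) x
  have h := integral_mul_deriv_eq_deriv_mul_of_integrable (u := fun x : ℝ => x ^ (n + 1))
    (u' := fun x : ℝ => ((n : ℝ) + 1) * x ^ n)
    (v := fun x : ℝ => rexp (-x ^ 2 / 2))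
    (v' := fun x : ℝ => rexp (-x ^ 2 / 2) * -x) (fun x _ => hu x) (fun x _ => hv x)
    ?_ ?_ ?_
  · have e1 : ∫ x : ℝ, x ^ (n + 1) * (rexp (-x ^ 2 / 2) * -x)
        = - ∫ x : ℝ, x ^ (n + 2) * rexp (-x ^ 2 / 2) := by
      rw [← integral_neg]; congr 1 with x; ring
    have e2 : ∫ x : ℝ, ((n : ℝ) + 1) * x ^ n * rexp (-x ^ 2 / 2)
        = ((n : ℝ) + 1) * ∫ x : ℝ, x ^ n * rexp (-x ^ 2 / 2) := by
      rw [← integral_const_mul]; congr 1 with x; ring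
    have := h
    rw [e1] at this
    rw [show (∫ x : ℝ, ((n : ℝ) + 1) * x ^ n * rexp (-x ^ 2 / 2))
      = ∫ x : ℝ, (fun x : ℝ => ((n : ℝ) + 1) * x ^ n) x
        * (fun x : ℝ => rexp (-x ^ 2 / 2)) x from rfl] at e2
    linarith [this, e2.symm]
  · apply ((integrable_pow_exp (n + 2)).neg).congr
    filter_upwards with x
    simp only [Pi.mul_apply, Pi.neg_apply]; ring
  · apply ((integrable_pow_exp n).const_mul ((n : ℝ) + 1)).congr
    filter_upwards with x
    simp only [Pi.mul_apply]; ring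
  · apply (integrable_pow_exp (n + 1)).congr
    filter_upwards with x
    simp only [Pi.mul_apply]

lemma Gm_eq_J (n : ℕ) : Gm n = (Real.sqrt (2 * π))⁻¹ * ∫ x : ℝ, x ^ n * rexp (-x ^ 2 / 2) :=
  integral_gaussianReal_eq _

lemma Gm_rec (n : ℕ) : Gm (n + 2) = (n + 1 : ℝ) * Gm n := by
  rw [Gm_eq_J, Gm_eq_J, J_rec]; ring

lemma Gm_succ (m : ℕ) : Gm (m + 1) = (m : ℝ) * Gm (m - 1) := by
  cases m with
  | zero => simpa using Gm_one
  | succ k => simpa using Gm_rec k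

noncomputable def stdGaussian (p : ℕ) : Measure (Fin p → ℝ) :=
  Measure.pi fun _ => gaussianReal 0 1

instance (p : ℕ) : IsProbabilityMeasure (stdGaussian p) := by
  unfold _root_.stdGaussian; infer_instance

section MultiDim

variable {p : ℕ}

lemma integrable_prod_pow (α : Fin p → ℕ) :
    Integrable (fun x : Fin p → ℝ => ∏ i, x i ^ α i) (stdGaussian p) := by
  letI : MeasureSpace ℝ := ⟨gaussianReal 0 1⟩
  haveI : SigmaFinite (volume : Measure ℝ) :=
    (inferInstance : SigmaFinite (gaussianReal 0 1))
  have h : ∀ i : Fin p, Integrable (fun t : ℝ => t ^ α i) (volume : Measure ℝ) :=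
    fun i => integrable_pow_gaussian (α i)
  exact Integrable.fintype_prod (f := fun i (t : ℝ) => t ^ α i) h

lemma integral_prod_pow (α : Fin p → ℕ) :
    ∫ x : Fin p → ℝ, (∏ i, x i ^ α i) ∂(stdGaussian p) = ∏ i, Gm (α i) := by
  letI : MeasureSpace ℝ := ⟨gaussianReal 0 1⟩
  haveI : SigmaFinite (volume : Measure ℝ) :=
    (inferInstance : SigmaFinite (gaussianReal 0 1))
  exact integral_fintype_prod_eq_prod (fun i (t : ℝ) => t ^ α i)

end MultiDim

section Epoly

open MvPolynomial

variable {p : ℕ}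

noncomputable def Ex (Q : MvPolynomial (Fin p) ℝ) : ℝ :=
  ∫ x, MvPolynomial.eval x Q ∂(stdGaussian p)

lemma eval_monomial' (α : Fin p →₀ ℕ) (c : ℝ) (x : Fin p → ℝ) :
    MvPolynomial.eval x (monomial α c) = c * ∏ i, x i ^ α i := by
  rw [eval_monomial]
  congr 1
  exact Finsupp.prod_fintype _ _ (fun i => pow_zero _)

lemma integrable_eval (Q : MvPolynomial (Fin p) ℝ) :
    Integrable (fun x => MvPolynomial.eval x Q) (stdGaussian p) := by
  rw [Q.as_sum]
  have : ∀ x : Fin p → ℝ, MvPolynomial.eval x (∑ α ∈ Q.support, monomial α (coeff α Q))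
      = ∑ α ∈ Q.support, coeff α Q * ∏ i, x i ^ α i := by
    intro x; rw [map_sum]; exact Finset.sum_congr rfl fun α _ => eval_monomial' _ _ _
  simp_rw [this]
  exact integrable_finset_sum _ fun α _ => (integrable_prod_pow _).const_mul _

lemma Ex_monomial (α : Fin p →₀ ℕ) (c : ℝ) :
    Ex (monomial α c) = c * ∏ i, Gm (α i) := by
  unfold Ex
  simp_rw [eval_monomial']
  rw [integral_const_mul, integral_prod_pow]

lemma Ex_add (P Q : MvPolynomial (Fin p) ℝ) : Ex (P + Q) = Ex P + Ex Q := by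
  unfold Ex
  simp_rw [map_add]
  exact integral_add (integrable_eval P) (integrable_eval Q)

lemma Ex_smul (c : ℝ) (Q : MvPolynomial (Fin p) ℝ) : Ex (c • Q) = c * Ex Q := by
  unfold Ex
  simp_rw [smul_eval]
  exact integral_const_mul c _

lemma Ex_sum {ι : Type*} (s : Finset ι) (f : ι → MvPolynomial (Fin p) ℝ) :
    Ex (∑ a ∈ s, f a) = ∑ a ∈ s, Ex (f a) := by
  unfold Ex
  simp_rw [map_sum]
  exact integral_finset_sum _ fun a _ => integrable_eval (f a)

lemma Ex_one : Ex (1 : MvPolynomial (Fin p) ℝ) = 1 := by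
  unfold Ex
  simp

lemma Ex_X_mul (i : Fin p) (Q : MvPolynomial (Fin p) ℝ) :
    Ex (X i * Q) = Ex (pderiv i Q) := by
  induction Q using MvPolynomial.induction_on' with
  | add P Q hP hQ => rw [mul_add, Ex_add, hP, hQ, map_add, Ex_add]
  | monomial α c =>
    rw [show (X i : MvPolynomial (Fin p) ℝ) = monomial (Finsupp.single i 1) 1 from rfl,
      monomial_mul, pderiv_monomial, Ex_monomial, Ex_monomial, one_mul]
    rw [Finset.prod_eq_mul_prod_sdiff_singleton_of_mem (Finset.mem_univ i),
      Finset.prod_eq_mul_prod_sdiff_singleton_of_mem (Finset.mem_univ i)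
        (fun j => Gm (((α - Finsupp.single i 1) : Fin p →₀ ℕ) j))]
    have h1 : ((Finsupp.single i 1 + α : Fin p →₀ ℕ)) i = α i + 1 := by
      simp [Finsupp.add_apply, Finsupp.single_apply, add_comm]
    have h2 : ((α - Finsupp.single i 1 : Fin p →₀ ℕ)) i = α i - 1 := by
      simp [Finsupp.tsub_apply, Finsupp.single_apply]
    have h3 : ∀ j ∈ Finset.univ \ {i}, Gm ((Finsupp.single i 1 + α : Fin p →₀ ℕ) j) = Gm (α j) := by
      intro j hj
      simp only [Finset.mem_sdiff, Finset.mem_singleton] at hj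
      simp [Finsupp.add_apply, Finsupp.single_apply, Ne.symm hj.2]
    have h4 : ∀ j ∈ Finset.univ \ {i}, Gm ((α - Finsupp.single i 1 : Fin p →₀ ℕ) j) = Gm (α j) := by
      intro j hj
      simp only [Finset.mem_sdiff, Finset.mem_singleton] at hj
      simp [Finsupp.tsub_apply, Finsupp.single_apply, Ne.symm hj.2]
    rw [Finset.prod_congr rfl h3, Finset.prod_congr rfl h4, h1, h2, Gm_succ (α i)]
    ring

end Epoly

section QFsec

open MvPolynomial Matrix

variable {p : ℕ}

noncomputable def QF (M : Matrix (Fin p) (Fin p) ℝ) : MvPolynomial (Fin p) ℝ :=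
  ∑ i, ∑ j, M i j • (X i * X j)

lemma eval_QF (M : Matrix (Fin p) (Fin p) ℝ) (x : Fin p → ℝ) :
    MvPolynomial.eval x (QF M) = M.mulVec x ⬝ᵥ x := by
  simp only [QF, map_sum, smul_eval, eval_mul, eval_X, mulVec, dotProduct, Finset.sum_mul]
  exact Finset.sum_congr rfl fun i _ => Finset.sum_congr rfl fun j _ => by ring

lemma Ex_zero : Ex (0 : MvPolynomial (Fin p) ℝ) = 0 := by
  unfold Ex; simp

lemma Ex_X_mul_X (i j : Fin p) :
    Ex ((X i : MvPolynomial (Fin p) ℝ) * X j) = if i = j then 1 else 0 := by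
  rw [Ex_X_mul]
  rcases eq_or_ne i j with h | h
  · subst h; rw [pderiv_X_self, Ex_one, if_pos rfl]
  · rw [pderiv_X_of_ne (Ne.symm h), Ex_zero, if_neg h]

lemma Ex_QF (M : Matrix (Fin p) (Fin p) ℝ) : Ex (QF M) = M.trace := by
  rw [QF, Ex_sum]
  simp_rw [Ex_sum, Ex_smul, Ex_X_mul_X]
  simp [Matrix.trace, Matrix.diag, Finset.sum_ite_eq, mul_ite]

lemma Ex_QF_mul (C : Matrix (Fin p) (Fin p) ℝ) (P : MvPolynomial (Fin p) ℝ) :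
    Ex (QF C * P)
      = C.trace * Ex P + ∑ i, ∑ j, C i j * Ex (X j * pderiv i P) := by
  have expand : QF C * P = ∑ i, ∑ j, C i j • (X i * (X j * P)) := by
    rw [QF, Finset.sum_mul]
    exact Finset.sum_congr rfl fun i _ => by
      rw [Finset.sum_mul]
      exact Finset.sum_congr rfl fun j _ => by rw [smul_mul_assoc, mul_assoc]
  rw [expand, Ex_sum]
  simp_rw [Ex_sum, Ex_smul, Ex_X_mul, pderiv_mul, Ex_add, pderiv_X, Pi.single_apply]
  have : ∀ i, ∑ j, C i j * (Ex ((if j = i then 1 else 0) * P) + Ex (X j * pderiv i P))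
      = C i i * Ex P + ∑ j, C i j * Ex (X j * pderiv i P) := by
    intro i
    simp_rw [mul_add]
    rw [Finset.sum_add_distrib]
    congr 1
    have : ∀ j, C i j * Ex ((if j = i then (1:MvPolynomial (Fin p) ℝ) else 0) * P)
        = if j = i then C i i * Ex P else 0 := by
      intro j
      rcases eq_or_ne j i with h | h
      · subst h; simp
      · simp [h, Ex_zero]
    simp_rw [this]
    simp
  simp_rw [this]
  rw [Finset.sum_add_distrib, Matrix.trace]
  simp only [Matrix.diag, Finset.sum_mul]
  congr 1
  exact Finset.sum_congr rfl fun i _ => Finset.sum_congr rfl fun j _ => by rw [Ex_X_mul]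

end QFsec

section Step

open MvPolynomial Matrix

variable {p : ℕ}

lemma Ex_natCast_mul (n : ℕ) (Q : MvPolynomial (Fin p) ℝ) :
    Ex ((n : MvPolynomial (Fin p) ℝ) * Q) = (n : ℝ) * Ex Q := by
  have : ((n : MvPolynomial (Fin p) ℝ)) * Q = (n : ℝ) • Q := by
    rw [smul_eq_C_mul, C_eq_coe_nat]
  rw [this, Ex_smul]

lemma pderiv_QF {B : Matrix (Fin p) (Fin p) ℝ} (hB : B.IsSymm) (i : Fin p) :
    pderiv i (QF B) = (2 : ℝ) • ∑ l, B i l • X l := by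
  have h1 : pderiv i (QF B) = (∑ l, B i l • X l) + ∑ l, B l i • X l := by
    rw [QF, map_sum]
    simp_rw [map_sum, Derivation.map_smul, pderiv_mul, pderiv_X, Pi.single_apply, smul_add,
      ite_mul, mul_ite, one_mul, mul_one, zero_mul, mul_zero, smul_ite, smul_zero]
    simp only [Finset.sum_add_distrib]
    congr 1
    · rw [Finset.sum_comm]
      simp [Finset.sum_ite_eq']
    · simp [Finset.sum_ite_eq']
  have h2 : ∀ l, B l i = B i l := fun l => by
    conv_lhs => rw [← hB]
    rfl
  rw [h1]
  simp_rw [h2]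
  rw [two_smul]

lemma Ex_QF_mul_expand (M : Matrix (Fin p) (Fin p) ℝ) (Q : MvPolynomial (Fin p) ℝ) :
    Ex (QF M * Q) = ∑ i, ∑ j, M i j * Ex (X i * (X j * Q)) := by
  have expand : QF M * Q = ∑ i, ∑ j, M i j • (X i * (X j * Q)) := by
    rw [QF, Finset.sum_mul]
    exact Finset.sum_congr rfl fun i _ => by
      rw [Finset.sum_mul]
      exact Finset.sum_congr rfl fun j _ => by rw [smul_mul_assoc, mul_assoc]
  rw [expand, Ex_sum]
  simp_rw [Ex_sum, Ex_smul]

lemma Ex_step {B : Matrix (Fin p) (Fin p) ℝ} (hB : B.IsSymm)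
    (C : Matrix (Fin p) (Fin p) ℝ) (k : ℕ) :
    Ex (QF C * QF B ^ (k + 1))
      = C.trace * Ex (QF B ^ (k + 1))
        + (2 * (k + 1) : ℝ) * Ex (QF (Cᵀ * B) * QF B ^ k) := by
  rw [Ex_QF_mul]
  congr 1
  have hpoly : ∀ i j : Fin p, (X j : MvPolynomial (Fin p) ℝ) * pderiv i (QF B ^ (k+1))
      = ((k+1 : ℕ) : MvPolynomial (Fin p) ℝ)
        * ((2:ℝ) • ∑ l, B i l • (X j * (X l * QF B ^ k))) := by
    intro i j
    rw [pderiv_pow, pderiv_QF hB i, Nat.add_sub_cancel]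
    simp only [Finset.smul_sum, Finset.mul_sum]
    refine Finset.sum_congr rfl fun l _ => ?_
    rw [smul_smul, smul_smul, mul_smul_comm, mul_smul_comm, mul_smul_comm]
    congr 1
    ring
  simp_rw [hpoly, Ex_natCast_mul, Ex_smul, Ex_sum, Ex_smul]
  rw [Ex_QF_mul_expand]
  simp_rw [Matrix.mul_apply, Matrix.transpose_apply, Finset.sum_mul, Finset.mul_sum]
  rw [Finset.sum_comm]
  congr 1 with j
  rw [Finset.sum_comm]
  congr 1 with l
  exact Finset.sum_congr rfl fun x _ => by push_cast; ring

end Step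

section Final

open MvPolynomial Matrix

variable {p : ℕ}

lemma trans_pow_mul {B : Matrix (Fin p) (Fin p) ℝ} (hB : B.IsSymm) (r : ℕ) :
    (B ^ r)ᵀ * B = B ^ (r + 1) := by
  rw [Matrix.transpose_pow, hB.eq, pow_succ]

lemma Ex_step' {B : Matrix (Fin p) (Fin p) ℝ} (hB : B.IsSymm) (r k : ℕ) :
    Ex (QF (B ^ r) * QF B ^ (k + 1))
      = (B ^ r).trace * Ex (QF B ^ (k + 1))
        + (2 * (k + 1) : ℝ) * Ex (QF (B ^ (r + 1)) * QF B ^ k) := by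
  rw [Ex_step hB (B ^ r) k, trans_pow_mul hB r]

lemma Ex_base {B : Matrix (Fin p) (Fin p) ℝ} (C : Matrix (Fin p) (Fin p) ℝ) :
    Ex (QF C * QF B ^ 0) = C.trace := by
  rw [pow_zero, mul_one, Ex_QF]

lemma m_succ {B : Matrix (Fin p) (Fin p) ℝ} (k : ℕ) :
    Ex (QF B ^ (k + 1)) = Ex (QF (B ^ 1) * QF B ^ k) := by
  rw [pow_one, pow_succ, mul_comm]

lemma step1 {B : Matrix (Fin p) (Fin p) ℝ} (hB : B.IsSymm) (k : ℕ) :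
    Ex (QF B * QF B ^ (k + 1))
      = B.trace * Ex (QF B ^ (k + 1))
        + (2 * (k + 1) : ℝ) * Ex (QF (B ^ 2) * QF B ^ k) := by
  have := Ex_step hB B k
  rwa [hB.eq, ← pow_two] at this

lemma moments {B : Matrix (Fin p) (Fin p) ℝ} (hB : B.IsSymm) :
    Ex (QF B ^ 2) = B.trace ^ 2 + 2 * (B ^ 2).trace ∧
    Ex (QF B ^ 4) = B.trace ^ 4 + 12 * B.trace ^ 2 * (B ^ 2).trace
      + 32 * B.trace * (B ^ 3).trace + 48 * (B ^ 4).trace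
      + 12 * ((B ^ 2).trace) ^ 2 := by
  have h10 : Ex (QF B * QF B ^ 0) = B.trace := Ex_base B
  have h20 : Ex (QF (B ^ 2) * QF B ^ 0) = (B ^ 2).trace := Ex_base _
  have h30 : Ex (QF (B ^ 3) * QF B ^ 0) = (B ^ 3).trace := Ex_base _
  have h40 : Ex (QF (B ^ 4) * QF B ^ 0) = (B ^ 4).trace := Ex_base _
  have ms : ∀ k, Ex (QF B ^ (k + 1)) = Ex (QF B * QF B ^ k) := fun k => by
    rw [pow_succ, mul_comm]
  have ms2 := ms 1
  have ms3 := ms 2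
  have ms4 := ms 3
  have s10 := step1 hB 0
  have s11 := step1 hB 1
  have s12 := step1 hB 2
  have s20 := Ex_step' hB 2 0
  have s21 := Ex_step' hB 2 1
  have s30 := Ex_step' hB 3 0
  norm_num at h10 h20 h30 h40 ms2 ms3 ms4 s10 s11 s12 s20 s21 s30
  have m2 : Ex (QF B ^ 2) = B.trace ^ 2 + 2 * (B ^ 2).trace := by
    linear_combination ms2 + s10 + B.trace * h10 + 2 * h20
  have m3 : Ex (QF B ^ 3) = B.trace ^ 3 + 6 * B.trace * (B ^ 2).trace
      + 8 * (B ^ 3).trace := by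
    linear_combination ms3 + s11 + B.trace * m2 + 4 * s20 + 4 * (B ^ 2).trace * h10
      + 8 * h30
  have m4 : Ex (QF B ^ 4) = B.trace ^ 4 + 12 * B.trace ^ 2 * (B ^ 2).trace
      + 32 * B.trace * (B ^ 3).trace + 48 * (B ^ 4).trace
      + 12 * ((B ^ 2).trace) ^ 2 := by
    linear_combination ms4 + s12 + B.trace * m3 + 6 * s21 + 6 * (B ^ 2).trace * m2
      + 24 * s30 + 24 * (B ^ 3).trace * h10 + 48 * h40
  exact ⟨m2, m4⟩

end Final

theorem stmt_6 {p : ℕ} (B : Matrix (Fin p) (Fin p) ℝ) (hB : B.IsSymm) :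
    variance (fun γ => (B.mulVec γ ⬝ᵥ γ) ^ 2) (stdGaussian p)
      = 8 * B.trace ^ 2 * (B ^ 2).trace + 32 * B.trace * (B ^ 3).trace
        + 48 * (B ^ 4).trace + 8 * ((B ^ 2).trace) ^ 2 := by
  have hfun : (fun γ : Fin p → ℝ => (B.mulVec γ ⬝ᵥ γ) ^ 2)
      = fun γ => MvPolynomial.eval γ (QF B ^ 2) := by
    funext γ; rw [map_pow, eval_QF]
  rw [hfun]
  have hmeas : AEStronglyMeasurable (fun γ => MvPolynomial.eval γ (QF B ^ 2))
      (stdGaussian p) := (MvPolynomial.continuous_eval _).aestronglyMeasurable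
  have hsq : ((fun γ : Fin p → ℝ => MvPolynomial.eval γ (QF B ^ 2)) ^ 2)
      = fun γ => MvPolynomial.eval γ (QF B ^ 4) := by
    funext γ
    simp only [Pi.pow_apply, ← map_pow, ← pow_mul]
  have hX : MemLp (fun γ => MvPolynomial.eval γ (QF B ^ 2)) 2 (stdGaussian p) := by
    refine (memLp_two_iff_integrable_sq hmeas).2 ?_
    apply (integrable_eval (QF B ^ 4)).congr
    filter_upwards with γ
    simp only [← map_pow, ← pow_mul]
  rw [variance_eq_sub hX, hsq]
  have h1 : ∫ γ, MvPolynomial.eval γ (QF B ^ 4) ∂(stdGaussian p) = Ex (QF B ^ 4) := rfl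
  have h2 : ∫ γ, MvPolynomial.eval γ (QF B ^ 2) ∂(stdGaussian p) = Ex (QF B ^ 2) := rfl
  rw [h1, h2, (moments hB).1, (moments hB).2]
  ring
end

section
/- Let ξ ~ N(0, V²) in R^p, B symmetric, W = V B V trace class with p̄ = tr W, v² = tr W², λ = ‖W‖_op. Then for every z > v: P(|⟨Bξ,ξ⟩ − p̄| ≥ z) ≤ 2 exp{−z² / (v + √(v² + 2λz))²} ≤ 2 exp{−z²/(4v² + 4λz)}. -/
open MeasureTheory ProbabilityTheory Matrix

/-- The Euclidean norm of a vector in `Fin p → ℝ`. -/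
noncomputable def enorm2 {p : ℕ} (v : Fin p → ℝ) : ℝ :=
  Real.sqrt (v ⬝ᵥ v)

section AuxLM
open Real NNReal ENNReal

/-- `log (1+u) ≥ u - u²/2` for `u ≥ 0`. -/
private lemma aux_log_ineq_nonpos {u : ℝ} (hu : 0 ≤ u) : u - u^2/2 ≤ Real.log (1+u) := by
  have h : MonotoneOn (fun u : ℝ => Real.log (1+u) - u + u^2/2) (Set.Ici 0) := by
    apply monotoneOn_of_deriv_nonneg (convex_Ici 0)
    · apply ContinuousOn.add (ContinuousOn.sub ?_ continuousOn_id) (by fun_prop)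
      apply ContinuousOn.log (by fun_prop)
      intro x hx; simp only [Set.mem_Ici] at hx; positivity
    · intro x hx
      rw [interior_Ici] at hx
      simp only [Set.mem_Ioi] at hx
      have h1 : (1:ℝ) + x ≠ 0 := by positivity
      apply DifferentiableAt.differentiableWithinAt
      have : DifferentiableAt ℝ (fun u : ℝ => Real.log (1+u)) x :=
        ((differentiable_const _).add differentiable_id).differentiableAt.log h1
      fun_prop (disch := assumption)
    · intro x hx
      rw [interior_Ici] at hx
      simp only [Set.mem_Ioi] at hx
      have h1 : (0:ℝ) < 1 + x := by positivity
      have hd : HasDerivAt (fun u : ℝ => Real.log (1+u) - u + u^2/2)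
          ((1+x)⁻¹ - 1 + x) x := by
        have h2 : HasDerivAt (fun u : ℝ => 1 + u) 1 x := (hasDerivAt_id x).const_add 1
        have h3 : HasDerivAt (fun u : ℝ => Real.log (1+u)) ((1+x)⁻¹ * 1) x :=
          (Real.hasDerivAt_log h1.ne').comp x h2
        have h4 : HasDerivAt (fun u : ℝ => u^2/2) (2*x^1/2) x :=
          (hasDerivAt_pow 2 x).div_const 2
        exact ((h3.sub (hasDerivAt_id' x)).add h4).congr_deriv (by ring)
      rw [hd.deriv]
      have : (1+x)⁻¹ - 1 + x = x^2/(1+x) := by field_simp; ring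
      rw [this]; positivity
  have := h (Set.self_mem_Ici) (Set.mem_Ici.2 hu) hu
  simp only [add_zero, Real.log_one] at this
  nlinarith [this]

/-- `log (1-2a) ≥ -2a - 2a²/(1-2a)` for `0 ≤ a < 1/2`. -/
private lemma aux_log_ineq_nonneg {a : ℝ} (ha : 0 ≤ a) (ha2 : a < 1/2) :
    -(2*a) - 2*(a^2/(1-2*a)) ≤ Real.log (1-2*a) := by
  have h : MonotoneOn (fun a : ℝ => a + a^2/(1-2*a) + Real.log (1-2*a)/2)
      (Set.Ico 0 (1/2)) := by
    apply monotoneOn_of_deriv_nonneg (convex_Ico 0 (1/2))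
    · have hne : ∀ x ∈ Set.Ico (0:ℝ) (1/2), (1:ℝ) - 2*x ≠ 0 := by
        intro x hx; simp only [Set.mem_Ico] at hx; nlinarith [hx.1, hx.2]
      apply ContinuousOn.add
      · exact ContinuousOn.add continuousOn_id (ContinuousOn.div (by fun_prop) (by fun_prop) hne)
      · exact ContinuousOn.div_const (ContinuousOn.log (by fun_prop) hne) 2
    · intro x hx
      rw [interior_Ico] at hx
      have hne : (1:ℝ) - 2*x ≠ 0 := by simp only [Set.mem_Ioo] at hx; nlinarith [hx.1, hx.2]
      apply DifferentiableAt.differentiableWithinAt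
      have h1 : DifferentiableAt ℝ (fun a : ℝ => (1:ℝ) - 2*a) x := by fun_prop
      have h2 : DifferentiableAt ℝ (fun a : ℝ => Real.log (1-2*a)) x := h1.log hne
      fun_prop (disch := assumption)
    · intro x hx
      rw [interior_Ico] at hx
      simp only [Set.mem_Ioo] at hx
      have hne : (0:ℝ) < 1 - 2*x := by nlinarith [hx.2]
      have hd : HasDerivAt (fun a : ℝ => a + a^2/(1-2*a) + Real.log (1-2*a)/2)
          (1 + ((2*x^1)*(1-2*x) - x^2*(-2))/(1-2*x)^2 + ((1-2*x)⁻¹ * (-2))/2) x := by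
        have h1 : HasDerivAt (fun a : ℝ => (1:ℝ) - 2*a) (-2) x := by
          simpa using ((hasDerivAt_id x).const_mul 2).const_sub 1
        have h2 : HasDerivAt (fun a : ℝ => Real.log (1-2*a)) ((1-2*x)⁻¹ * (-2)) x :=
          HasDerivAt.comp x (Real.hasDerivAt_log hne.ne') h1
        have h3 : HasDerivAt (fun a : ℝ => a^2/(1-2*a))
            (((2*x^1)*(1-2*x) - x^2*(-2))/(1-2*x)^2) x :=
          (hasDerivAt_pow 2 x).div h1 hne.ne'
        exact ((hasDerivAt_id x).add h3).add (h2.div_const 2)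
      rw [hd.deriv]
      have : 1 + ((2*x^1)*(1-2*x) - x^2*(-2))/(1-2*x)^2 + ((1-2*x)⁻¹ * (-2))/2
          = 2*x^2/(1-2*x)^2 := by field_simp; ring
      rw [this]; positivity
  have h0 : (0:ℝ) ∈ Set.Ico (0:ℝ) (1/2) := ⟨le_refl 0, by norm_num⟩
  have ha' : a ∈ Set.Ico (0:ℝ) (1/2) := ⟨ha, by linarith⟩
  have := h h0 ha' ha
  simp only [zero_pow, ne_eq, OfNat.ofNat_ne_zero, not_false_eq_true, zero_div,
    mul_zero, sub_zero, Real.log_one, add_zero, zero_add, zero_div] at this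
  have hne : (0:ℝ) < 1 - 2*a := by nlinarith
  nlinarith [this]

/-- combined: `(√(1-2a))⁻¹ ≤ exp (a + a²/(1-2L))` for `|a| ≤ L < 1/2`. -/
private lemma aux_sqrt_bound {a L : ℝ} (hL : L < 1/2) (ha : |a| ≤ L) :
    (Real.sqrt (1 - 2*a))⁻¹ ≤ Real.exp (a + a^2/(1-2*L)) := by
  have habs := abs_le.1 ha
  have hL0 : 0 ≤ L := le_trans (abs_nonneg a) ha
  have h1 : (0:ℝ) < 1 - 2*a := by nlinarith [habs.2]
  have h2 : (0:ℝ) < 1 - 2*L := by nlinarith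
  have hsqrt : Real.sqrt (1-2*a) = Real.exp (Real.log (1-2*a)/2) := by
    rw [eq_comm, ← Real.exp_log (Real.sqrt_pos.2 h1), Real.log_sqrt h1.le]
  rw [hsqrt, ← Real.exp_neg, Real.exp_le_exp]
  rcases le_or_gt 0 a with hcase | hcase
  · have key := aux_log_ineq_nonneg hcase (by nlinarith [habs.2])
    have h3 : a^2/(1-2*a) ≤ a^2/(1-2*L) :=
      div_le_div_of_nonneg_left (sq_nonneg a) h2 (by nlinarith [habs.2])
    nlinarith [key]
  · have key := aux_log_ineq_nonpos (u := -2*a) (by linarith)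
    have h4 : Real.log (1 - 2*a) = Real.log (1 + (-2*a)) := by ring_nf
    have h3 : a^2 ≤ a^2/(1-2*L) := by
      rw [le_div_iff₀ h2]; nlinarith [sq_nonneg a]
    nlinarith [key]

private lemma aux_gauss_density (g : ℝ → ℝ) :
    ∫ y, g y ∂(gaussianReal 0 1) = ∫ y, gaussianPDFReal 0 1 y * g y := by
  rw [gaussianReal_of_var_ne_zero 0 one_ne_zero]
  have : (gaussianPDF 0 1) = fun y => ((Real.toNNReal (gaussianPDFReal 0 1 y) : ℝ≥0) : ℝ≥0∞) := by
    funext y; rw [gaussianPDF_def]; rfl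
  rw [this, integral_withDensity_eq_integral_smul]
  · congr 1; funext y
    rw [NNReal.smul_def, smul_eq_mul, Real.coe_toNNReal _ (gaussianPDFReal_nonneg 0 1 y)]
  · exact (measurable_gaussianPDFReal 0 1).real_toNNReal

private lemma aux_integrable_gauss {c : ℝ} (hc : c < 1/2) :
    Integrable (fun y => Real.exp (c * y^2)) (gaussianReal 0 1) := by
  rw [gaussianReal_of_var_ne_zero 0 one_ne_zero]
  have hdens : (gaussianPDF 0 1) = fun y => ((Real.toNNReal (gaussianPDFReal 0 1 y) : ℝ≥0) : ℝ≥0∞) := by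
    funext y; rw [gaussianPDF_def]; rfl
  rw [hdens, integrable_withDensity_iff_integrable_smul
    (measurable_gaussianPDFReal 0 1).real_toNNReal]
  have : (fun y => (Real.toNNReal (gaussianPDFReal 0 1 y) : ℝ≥0) • Real.exp (c * y^2))
      = fun y => (Real.sqrt (2*Real.pi))⁻¹ * Real.exp (-(1/2 - c) * y^2) := by
    funext y
    rw [NNReal.smul_def, smul_eq_mul, Real.coe_toNNReal _ (gaussianPDFReal_nonneg 0 1 y),
      gaussianPDFReal_def]
    simp only [NNReal.coe_one, mul_one, sub_zero]
    rw [mul_assoc, ← Real.exp_add]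
    ring_nf
  rw [this]
  exact (integrable_exp_neg_mul_sq (by linarith)).const_mul _

private lemma aux_integral_gauss {c : ℝ} (hc : c < 1/2) :
    ∫ y, Real.exp (c * y^2) ∂(gaussianReal 0 1) = (Real.sqrt (1 - 2*c))⁻¹ := by
  rw [aux_gauss_density]
  have h1 : (fun y => gaussianPDFReal 0 1 y * Real.exp (c * y^2))
      = fun y => (Real.sqrt (2*Real.pi))⁻¹ * Real.exp (-(1/2 - c) * y^2) := by
    funext y
    rw [gaussianPDFReal_def]
    simp only [NNReal.coe_one, mul_one, sub_zero]
    rw [mul_assoc, ← Real.exp_add]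
    ring_nf
  rw [h1, integral_const_mul, integral_gaussian]
  have hb : (0:ℝ) < 1/2 - c := by linarith
  have hpi : (0:ℝ) < Real.pi := Real.pi_pos
  have hc2 : (0:ℝ) < 1 - 2*c := by linarith
  rw [show Real.pi / (1/2 - c) = (2*Real.pi) * (1 - 2*c)⁻¹ by field_simp]
  rw [Real.sqrt_mul (by positivity : (0:ℝ) ≤ 2*Real.pi) ((1-2*c)⁻¹), Real.sqrt_inv,
    Real.sqrt_mul (by norm_num : (0:ℝ) ≤ 2) Real.pi]
  have hne2 : Real.sqrt 2 ≠ 0 := by positivity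
  have hnepi : Real.sqrt Real.pi ≠ 0 := by positivity
  field_simp

private lemma aux_stdGaussian_withDensity (p : ℕ) :
    stdGaussian p = (volume : Measure (Fin p → ℝ)).withDensity
      (fun x => ENNReal.ofReal (∏ i, gaussianPDFReal 0 1 (x i))) := by
  refine Measure.pi_eq (fun s hs => ?_)
  have hD : Measurable (fun x : Fin p → ℝ => ENNReal.ofReal (∏ i, gaussianPDFReal 0 1 (x i))) := by
    apply Measurable.ennreal_ofReal
    exact Finset.measurable_prod _ (fun i _ =>
      (measurable_gaussianPDFReal 0 1).comp (measurable_pi_apply i))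
  rw [withDensity_apply _ (MeasurableSet.univ_pi hs),
    ← lintegral_indicator (MeasurableSet.univ_pi hs) _]
  set f : Fin p → ℝ → ℝ := fun i => (s i).indicator (gaussianPDFReal 0 1)
  have hint : ∀ i, Integrable (f i) volume := fun i =>
    (integrable_gaussianPDFReal 0 1).indicator (hs i)
  have hfnn : ∀ i x, 0 ≤ f i x := by
    intro i x
    exact Set.indicator_nonneg (fun y _ => gaussianPDFReal_nonneg 0 1 y) x
  have hind : (Set.univ.pi s).indicator
      (fun x => ENNReal.ofReal (∏ i, gaussianPDFReal 0 1 (x i)))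
      = fun x => ENNReal.ofReal (∏ i, f i (x i)) := by
    funext x
    by_cases hx : x ∈ Set.univ.pi s
    · rw [Set.indicator_of_mem hx]
      congr 1
      refine Finset.prod_congr rfl (fun i _ => ?_)
      exact (Set.indicator_of_mem (hx i (Set.mem_univ i)) _).symm
    · rw [Set.indicator_of_notMem hx]
      simp only [Set.mem_pi, Set.mem_univ, forall_true_left] at hx
      push_neg at hx
      obtain ⟨j, hj⟩ := hx
      rw [eq_comm, ENNReal.ofReal_eq_zero]
      refine le_of_eq (Finset.prod_eq_zero (Finset.mem_univ j) ?_)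
      exact Set.indicator_of_notMem hj _
  rw [hind]
  have hprod_int : Integrable (fun x : Fin p → ℝ => ∏ i, f i (x i)) volume := by
    have := Integrable.fintype_prod_dep (𝕜 := ℝ) (E := fun _ : Fin p => ℝ) (f := f) hint
    exact this
  rw [← ofReal_integral_eq_lintegral_ofReal hprod_int
    (Filter.Eventually.of_forall (fun x => Finset.prod_nonneg (fun i _ => hfnn i (x i))))]
  rw [MeasureTheory.integral_fintype_prod_volume_eq_prod f]
  rw [ENNReal.ofReal_prod_of_nonneg (fun i _ => integral_nonneg (hfnn i))]
  refine Finset.prod_congr rfl (fun i _ => ?_)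
  rw [gaussianReal_apply_eq_integral 0 one_ne_zero (s i), integral_indicator (hs i)]

private lemma aux_pdf_orth {p : ℕ} {M : Matrix (Fin p) (Fin p) ℝ} (hM : Mᵀ * M = 1)
    (x : Fin p → ℝ) :
    (∏ i, gaussianPDFReal 0 1 ((M *ᵥ x) i)) = ∏ i, gaussianPDFReal 0 1 (x i) := by
  have hdot : (M *ᵥ x) ⬝ᵥ (M *ᵥ x) = x ⬝ᵥ x := by
    rw [Matrix.dotProduct_mulVec]
    rw [← Matrix.vecMul_transpose, Matrix.vecMul_vecMul, hM, Matrix.vecMul_one]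
  have key : ∀ y : Fin p → ℝ, (∏ i, gaussianPDFReal 0 1 (y i))
      = (Real.sqrt (2*Real.pi))⁻¹ ^ p * Real.exp (-(y ⬝ᵥ y)/2) := by
    intro y
    simp only [gaussianPDFReal_def, NNReal.coe_one, mul_one, sub_zero]
    rw [Finset.prod_mul_distrib, Finset.prod_const, ← Real.exp_sum, Finset.card_univ,
      Fintype.card_fin]
    congr 1
    rw [Finset.sum_congr rfl (fun (i : Fin p) _ => (by rw [sq] : -y i ^ 2 / 2 = -(y i * y i)/2)),
      dotProduct, ← Finset.sum_div, Finset.sum_neg_distrib]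
  rw [key, key, hdot]

private lemma aux_stdGaussian_orth_inv {p : ℕ} {M : Matrix (Fin p) (Fin p) ℝ} (hM : Mᵀ * M = 1)
    {S : Set (Fin p → ℝ)} (hS : MeasurableSet S) :
    stdGaussian p ((fun x => M *ᵥ x) ⁻¹' S) = stdGaussian p S := by
  have hdet : M.det = 1 ∨ M.det = -1 := by
    have h1 : M.det * M.det = 1 := by
      have := congrArg Matrix.det hM
      rwa [Matrix.det_mul, Matrix.det_transpose, Matrix.det_one] at this
    rcases mul_self_eq_one_iff.1 h1 with h | h
    · exact Or.inl h
    · exact Or.inr h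
  have hdet0 : M.det ≠ 0 := by rcases hdet with h | h <;> rw [h] <;> norm_num
  have hlin : (fun x : Fin p → ℝ => M *ᵥ x) = ⇑(Matrix.toLin' M) := by
    funext x; rw [Matrix.toLin'_apply]
  have hmeas : Measurable (fun x : Fin p → ℝ => M *ᵥ x) := by
    rw [hlin]
    exact (LinearMap.continuous_of_finiteDimensional _).measurable
  have hvol : Measure.map (fun x : Fin p → ℝ => M *ᵥ x) volume = volume := by
    rw [hlin]
    rw [Real.map_linearMap_volume_pi_eq_smul_volume_pi (by rwa [LinearMap.det_toLin'])]
    rw [LinearMap.det_toLin']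
    have : |(M.det)⁻¹| = 1 := by rcases hdet with h | h <;> rw [h] <;> norm_num
    rw [this, ENNReal.ofReal_one, one_smul]
  set D : (Fin p → ℝ) → ℝ≥0∞ := fun x => ENNReal.ofReal (∏ i, gaussianPDFReal 0 1 (x i))
    with hDdef
  have hD : Measurable D := by
    apply Measurable.ennreal_ofReal
    exact Finset.measurable_prod _ (fun i _ =>
      (measurable_gaussianPDFReal 0 1).comp (measurable_pi_apply i))
  have hDinv : ∀ x, D (M *ᵥ x) = D x := by
    intro x; rw [hDdef]; simp only
    rw [aux_pdf_orth hM]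
  rw [aux_stdGaussian_withDensity]
  rw [withDensity_apply _ (hS.preimage hmeas), withDensity_apply _ hS]
  rw [← lintegral_indicator (hS.preimage hmeas) _, ← lintegral_indicator hS _]
  have hind : ((fun x => M *ᵥ x) ⁻¹' S).indicator D = fun x => S.indicator D (M *ᵥ x) := by
    funext x
    by_cases hx : M *ᵥ x ∈ S
    · rw [Set.indicator_of_mem hx, Set.indicator_of_mem (Set.mem_preimage.2 hx), hDinv]
    · rw [Set.indicator_of_notMem hx]
      exact Set.indicator_of_notMem (s := (fun y => M *ᵥ y) ⁻¹' S) (fun h => hx h) D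
  rw [hind, ← lintegral_map (hD.indicator hS) hmeas, hvol]

private lemma aux_exp_sum_eq {p : ℕ} (c : Fin p → ℝ) (x : Fin p → ℝ) :
    Real.exp (∑ i, c i * x i ^ 2) = ∏ i, Real.exp (c i * x i ^ 2) := Real.exp_sum _ _

private lemma aux_mgf_integrable {p : ℕ} (c : Fin p → ℝ) (hc : ∀ i, c i < 1/2) :
    Integrable (fun x => Real.exp (∑ i, c i * x i ^ 2)) (stdGaussian p) := by
  have h := MeasureTheory.Integrable.fintype_prod_dep (𝕜 := ℝ) (E := fun _ : Fin p => ℝ)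
    (f := fun i y => Real.exp (c i * y ^ 2)) (μ := fun _ => gaussianReal 0 1)
    (fun i => aux_integrable_gauss (hc i))
  have heq : (fun x : Fin p → ℝ => ∏ i, Real.exp (c i * x i ^ 2))
      = fun x => Real.exp (∑ i, c i * x i ^ 2) := by
    funext x; rw [aux_exp_sum_eq]
  rw [heq] at h
  exact h

private lemma aux_mgf_bound {p : ℕ} (c : Fin p → ℝ) (L : ℝ) (hL : L < 1/2)
    (hc : ∀ i, |c i| ≤ L) :
    ∫ x, Real.exp (∑ i, c i * x i ^ 2) ∂(stdGaussian p)
      ≤ Real.exp ((∑ i, c i) + (∑ i, (c i)^2) / (1 - 2*L)) := by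
  have hci : ∀ i, c i < 1/2 := fun i => lt_of_le_of_lt (le_abs_self _) (lt_of_le_of_lt (hc i) hL)
  have h := MeasureTheory.integral_fintype_prod_eq_prod (𝕜 := ℝ) (E := fun _ : Fin p => ℝ)
    (fun i y => Real.exp (c i * y ^ 2)) (μ := fun _ => gaussianReal 0 1)
  have heq : (fun x : Fin p → ℝ => ∏ i, Real.exp (c i * x i ^ 2))
      = fun x => Real.exp (∑ i, c i * x i ^ 2) := by
    funext x; rw [aux_exp_sum_eq]
  rw [heq] at h
  have h2 : ∫ x, Real.exp (∑ i, c i * x i ^ 2) ∂(stdGaussian p)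
      = ∏ i, (Real.sqrt (1-2*c i))⁻¹ := by
    refine Eq.trans ?_ (Finset.prod_congr rfl (fun i _ => aux_integral_gauss (hci i)))
    exact h
  rw [h2]
  calc ∏ i, (Real.sqrt (1-2*c i))⁻¹ ≤ ∏ i, Real.exp (c i + (c i)^2/(1-2*L)) := by
        refine Finset.prod_le_prod (fun i _ => by positivity)
          (fun i _ => aux_sqrt_bound hL (hc i))
    _ = Real.exp ((∑ i, c i) + (∑ i, (c i)^2) / (1 - 2*L)) := by
        rw [← Real.exp_sum, Finset.sum_add_distrib, ← Finset.sum_div]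

private lemma aux_chi_tail {p : ℕ} (d : Fin p → ℝ) (lam v z : ℝ) (hlam0 : 0 ≤ lam)
    (hlam : ∀ i, |d i| ≤ lam) (hv2 : v^2 = ∑ i, d i ^ 2) (hv0 : 0 < v) (hz0 : 0 < z) :
    stdGaussian p {x | z ≤ |(∑ i, d i * x i ^ 2) - ∑ i, d i|}
      ≤ ENNReal.ofReal (2 * Real.exp (-(z / (v + Real.sqrt (v^2 + 2*lam*z)))^2)) := by
  haveI : IsProbabilityMeasure (stdGaussian p) := by
    unfold _root_.stdGaussian; infer_instance
  set r := Real.sqrt (v^2 + 2*lam*z) with hrdef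
  have hr0 : 0 ≤ r := Real.sqrt_nonneg _
  have hr2 : r^2 = v^2 + 2*lam*z := Real.sq_sqrt (by positivity)
  have hvr : 0 < v + r := by linarith
  set s := z / (v + r) with hsdef
  have hs0 : 0 < s := div_pos hz0 hvr
  have hsz : s * (v + r) = z := div_mul_cancel₀ z hvr.ne'
  have hrv : r = v + 2*lam*s := by
    have hfac : (r - v - 2*lam*s) * (v + r) = 0 := by
      linear_combination hr2 - 2*lam*hsz
    rcases mul_eq_zero.1 hfac with h | h
    · linarith
    · linarith
  have hzs : z = 2*v*s + 2*lam*s^2 := by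
    rw [← hsz, hrv]; ring
  set t := s / (v + 2*lam*s) with htdef
  have hden : 0 < v + 2*lam*s := by positivity
  have ht0 : 0 < t := div_pos hs0 hden
  have h2tl : 2*t*lam < 1 := by
    have e : 2*t*lam = (2*s*lam)/(v+2*lam*s) := by rw [htdef]; ring
    rw [e, div_lt_one hden]
    nlinarith
  have htlam : t * lam < 1/2 := by linarith
  have htlam0 : 0 ≤ t * lam := by positivity
  have hexp : -(t*z) + (t^2 * v^2) / (1 - 2*(t*lam)) = -s^2 := by
    have h1m : 1 - 2*(t*lam) = v / (v + 2*lam*s) := by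
      rw [htdef]; field_simp; ring
    rw [h1m, htdef, hzs]
    field_simp
    ring
  set X : (Fin p → ℝ) → ℝ := fun x => ∑ i, d i * x i ^ 2 with hXdef
  set pb := ∑ i, d i with hpbdef
  have habs : ∀ (u : ℝ), ∀ i, |u * d i| ≤ |u| * lam := by
    intro u i
    rw [abs_mul]
    exact mul_le_mul_of_nonneg_left (hlam i) (abs_nonneg u)
  have hup : (stdGaussian p {x | pb + z ≤ X x}).toReal ≤ Real.exp (-s^2) := by
    have hint : Integrable (fun x => Real.exp (t * X x)) (stdGaussian p) := by
      have : (fun x => Real.exp (t * X x)) = fun x => Real.exp (∑ i, (t * d i) * x i ^ 2) := by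
        funext x; rw [hXdef]; congr 1; rw [Finset.mul_sum]
        exact Finset.sum_congr rfl (fun i _ => by ring)
      rw [this]
      refine aux_mgf_integrable _ (fun i => ?_)
      calc t * d i ≤ |t * d i| := le_abs_self _
        _ ≤ |t| * lam := habs t i
        _ = t * lam := by rw [abs_of_pos ht0]
        _ < 1/2 := htlam
    have hcher := measure_ge_le_exp_mul_mgf (X := X) (μ := stdGaussian p) (pb + z) ht0.le hint
    have hmgf : mgf X (stdGaussian p) t
        ≤ Real.exp (t * pb + (t^2 * v^2) / (1 - 2*(t*lam))) := by
      rw [mgf]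
      have he : (fun x => Real.exp (t * X x)) = fun x => Real.exp (∑ i, (t * d i) * x i ^ 2) := by
        funext x; rw [hXdef]; congr 1; rw [Finset.mul_sum]
        exact Finset.sum_congr rfl (fun i _ => by ring)
      rw [he]
      have hc1 : ∀ i, |t * d i| ≤ t * lam := by
        intro i
        calc |t * d i| ≤ |t| * lam := habs t i
          _ = t * lam := by rw [abs_of_pos ht0]
      refine le_trans (aux_mgf_bound (fun i => t * d i) (t*lam) htlam hc1) ?_
      rw [Real.exp_le_exp]
      have e1 : ∑ i, t * d i = t * pb := by rw [hpbdef, Finset.mul_sum]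
      have e2 : ∑ i, (t * d i)^2 = t^2 * v^2 := by
        rw [hv2, Finset.mul_sum]
        exact Finset.sum_congr rfl (fun i _ => by ring)
      rw [e1, e2]
    calc (stdGaussian p {x | pb + z ≤ X x}).toReal
        ≤ Real.exp (-t * (pb + z)) * mgf X (stdGaussian p) t := hcher
      _ ≤ Real.exp (-t * (pb + z)) * Real.exp (t * pb + (t^2 * v^2) / (1 - 2*(t*lam))) := by
          exact mul_le_mul_of_nonneg_left hmgf (Real.exp_pos _).le
      _ = Real.exp (-t * (pb + z) + (t * pb + (t^2 * v^2) / (1 - 2*(t*lam)))) := by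
          rw [← Real.exp_add]
      _ = Real.exp (-s^2) := by
          congr 1
          rw [← hexp]; ring
  have hlow : (stdGaussian p {x | X x ≤ pb - z}).toReal ≤ Real.exp (-s^2) := by
    have hint : Integrable (fun x => Real.exp (-t * X x)) (stdGaussian p) := by
      have : (fun x => Real.exp (-t * X x)) = fun x => Real.exp (∑ i, (-t * d i) * x i ^ 2) := by
        funext x; rw [hXdef]; congr 1; rw [Finset.mul_sum]
        exact Finset.sum_congr rfl (fun i _ => by ring)
      rw [this]
      refine aux_mgf_integrable _ (fun i => ?_)
      calc -t * d i ≤ |(-t) * d i| := le_abs_self _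
        _ ≤ |(-t)| * lam := habs (-t) i
        _ = t * lam := by rw [abs_neg, abs_of_pos ht0]
        _ < 1/2 := htlam
    have hcher := measure_le_le_exp_mul_mgf (X := X) (μ := stdGaussian p) (pb - z)
      (t := -t) (by linarith) hint
    have hmgf : mgf X (stdGaussian p) (-t)
        ≤ Real.exp (-t * pb + (t^2 * v^2) / (1 - 2*(t*lam))) := by
      rw [mgf]
      have he : (fun x => Real.exp (-t * X x)) = fun x => Real.exp (∑ i, (-t * d i) * x i ^ 2) := by
        funext x; rw [hXdef]; congr 1; rw [Finset.mul_sum]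
        exact Finset.sum_congr rfl (fun i _ => by ring)
      rw [he]
      have hc2 : ∀ i, |-t * d i| ≤ t * lam := by
        intro i
        calc |-t * d i| ≤ |(-t)| * lam := habs (-t) i
          _ = t * lam := by rw [abs_neg, abs_of_pos ht0]
      refine le_trans (aux_mgf_bound (fun i => -t * d i) (t*lam) htlam hc2) ?_
      rw [Real.exp_le_exp]
      have e1 : ∑ i, -t * d i = -t * pb := by rw [hpbdef, Finset.mul_sum]
      have e2 : ∑ i, (-t * d i)^2 = t^2 * v^2 := by
        rw [hv2, Finset.mul_sum]
        exact Finset.sum_congr rfl (fun i _ => by ring)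
      rw [e1, e2]
    calc (stdGaussian p {x | X x ≤ pb - z}).toReal
        ≤ Real.exp (-(-t) * (pb - z)) * mgf X (stdGaussian p) (-t) := hcher
      _ ≤ Real.exp (-(-t) * (pb - z)) * Real.exp (-t * pb + (t^2 * v^2) / (1 - 2*(t*lam))) := by
          exact mul_le_mul_of_nonneg_left hmgf (Real.exp_pos _).le
      _ = Real.exp (-(-t) * (pb - z) + (-t * pb + (t^2 * v^2) / (1 - 2*(t*lam)))) := by
          rw [← Real.exp_add]
      _ = Real.exp (-s^2) := by
          congr 1
          rw [← hexp]; ring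
  have hsub : {x : Fin p → ℝ | z ≤ |X x - pb|} ⊆ {x | pb + z ≤ X x} ∪ {x | X x ≤ pb - z} := by
    intro x hx
    simp only [Set.mem_setOf_eq] at hx
    rcases le_abs.1 hx with h | h
    · exact Or.inl (by simp only [Set.mem_setOf_eq]; linarith)
    · exact Or.inr (by simp only [Set.mem_setOf_eq]; linarith)
  have hmono := measure_mono (μ := stdGaussian p) hsub
  have hunion := measure_union_le (μ := stdGaussian p) {x | pb + z ≤ X x} {x | X x ≤ pb - z}
  have hfin1 : stdGaussian p {x | pb + z ≤ X x} ≠ ⊤ := measure_ne_top _ _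
  have hfin2 : stdGaussian p {x | X x ≤ pb - z} ≠ ⊤ := measure_ne_top _ _
  have hb1 : stdGaussian p {x | pb + z ≤ X x} ≤ ENNReal.ofReal (Real.exp (-s^2)) := by
    rw [← ENNReal.ofReal_toReal hfin1]
    exact ENNReal.ofReal_le_ofReal hup
  have hb2 : stdGaussian p {x | X x ≤ pb - z} ≤ ENNReal.ofReal (Real.exp (-s^2)) := by
    rw [← ENNReal.ofReal_toReal hfin2]
    exact ENNReal.ofReal_le_ofReal hlow
  calc stdGaussian p {x | z ≤ |X x - pb|}
      ≤ stdGaussian p ({x | pb + z ≤ X x} ∪ {x | X x ≤ pb - z}) := hmono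
    _ ≤ stdGaussian p {x | pb + z ≤ X x} + stdGaussian p {x | X x ≤ pb - z} := hunion
    _ ≤ ENNReal.ofReal (Real.exp (-s^2)) + ENNReal.ofReal (Real.exp (-s^2)) :=
        add_le_add hb1 hb2
    _ = ENNReal.ofReal (2 * Real.exp (-(z / (v + r))^2)) := by
        rw [← ENNReal.ofReal_add (Real.exp_pos _).le (Real.exp_pos _).le]
        congr 1
        rw [← hsdef]
        ring

private lemma aux_eigen_norm_bound {p : ℕ} (hp : 0 < p) (W : Matrix (Fin p) (Fin p) ℝ)
    (hW : W.IsHermitian) (i : Fin p) :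
    |hW.eigenvalues i| ≤ ‖Matrix.toEuclideanCLM (𝕜 := ℝ) W‖ := by
  haveI : Nontrivial (EuclideanSpace ℝ (Fin p)) := by
    refine ⟨0, EuclideanSpace.single ⟨0, hp⟩ 1, ?_⟩
    intro h
    have := congrArg (fun f : EuclideanSpace ℝ (Fin p) => f ⟨0, hp⟩) h
    simp [EuclideanSpace.single_apply] at this
  have hmem : hW.eigenvalues i ∈ spectrum ℝ W := hW.eigenvalues_mem_spectrum_real i
  have hspec : spectrum ℝ (Matrix.toEuclideanCLM (𝕜 := ℝ) W) = spectrum ℝ W :=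
    AlgEquiv.spectrum_eq (Matrix.toEuclideanCLM (𝕜 := ℝ) (n := Fin p)) W
  rw [← hspec] at hmem
  have := spectrum.norm_le_norm_of_mem hmem
  simpa using this

private lemma aux_easy_ineq (v lam z : ℝ) (hv : 0 ≤ v) (hlam : 0 ≤ lam) (hz : v < z) :
    2 * Real.exp (-(z ^ 2) / (v + Real.sqrt (v ^ 2 + 2 * lam * z)) ^ 2)
      ≤ 2 * Real.exp (-(z ^ 2) / (4 * v ^ 2 + 4 * lam * z)) := by
  have hz0 : 0 < z := lt_of_le_of_lt hv hz
  set r := Real.sqrt (v^2 + 2*lam*z) with hrdef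
  have hr0 : 0 ≤ r := Real.sqrt_nonneg _
  have hr2 : r^2 = v^2 + 2*lam*z := Real.sq_sqrt (by positivity)
  have hAB : (v + r)^2 ≤ 4*v^2 + 4*lam*z := by nlinarith [sq_nonneg (v - r)]
  rcases eq_or_lt_of_le (by positivity : (0:ℝ) ≤ v + r) with h0 | h0
  · have hv0 : v = 0 := by nlinarith
    have hr00 : r = 0 := by nlinarith
    have hlam0 : lam * z = 0 := by nlinarith [hr2]
    rw [← h0, hv0] at *
    have : (4:ℝ)*0^2 + 4*(lam*z) = 0 := by rw [hlam0]; ring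
    rw [show (4:ℝ)*0^2+4*lam*z = 4*0^2+4*(lam*z) by ring, this]
    norm_num
  · have hA : (0:ℝ) < (v+r)^2 := by positivity
    have hB : (0:ℝ) < 4*v^2 + 4*lam*z := lt_of_lt_of_le hA hAB
    have key : -(z^2)/(v+r)^2 ≤ -(z^2)/(4*v^2+4*lam*z) := by
      rw [neg_div, neg_div, neg_le_neg_iff]
      exact div_le_div_of_nonneg_left (by positivity) hA hAB
    exact mul_le_mul_of_nonneg_left (Real.exp_le_exp.2 key) (by norm_num)

end AuxLM

theorem stmt_14 {p : ℕ} (V B W : Matrix (Fin p) (Fin p) ℝ)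
    (hV : V.PosSemidef) (hB : B.IsSymm) (hW : W = V * B * V)
    (pbar v lam : ℝ) (hpbar : pbar = W.trace) (hv : v = Real.sqrt ((W ^ 2).trace))
    (hlam : lam = ‖Matrix.toEuclideanCLM (𝕜 := ℝ) W‖)
    (z : ℝ) (hz : z > v) :
    stdGaussian p {γ | |B.mulVec (V.mulVec γ) ⬝ᵥ V.mulVec γ - pbar| ≥ z}
      ≤ ENNReal.ofReal (2 * Real.exp (-(z ^ 2) / (v + Real.sqrt (v ^ 2 + 2 * lam * z)) ^ 2)) ∧
    2 * Real.exp (-(z ^ 2) / (v + Real.sqrt (v ^ 2 + 2 * lam * z)) ^ 2)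
      ≤ 2 * Real.exp (-(z ^ 2) / (4 * v ^ 2 + 4 * lam * z)) := by
  have hv0 : 0 ≤ v := hv ▸ Real.sqrt_nonneg _
  have hlam0 : 0 ≤ lam := hlam ▸ norm_nonneg _
  have hz0 : 0 < z := lt_of_le_of_lt hv0 hz
  refine ⟨?_, aux_easy_ineq v lam z hv0 hlam0 hz⟩
  -- the measure bound
  have hVsym : Vᵀ = V := by
    have := hV.1
    rwa [Matrix.IsHermitian, Matrix.conjTranspose_eq_transpose_of_trivial] at this
  have hWH : W.IsHermitian := by
    rw [Matrix.IsHermitian, Matrix.conjTranspose_eq_transpose_of_trivial, hW,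
      Matrix.transpose_mul, Matrix.transpose_mul, hVsym, hB.eq, Matrix.mul_assoc]
  have hquad : ∀ γ : Fin p → ℝ, B.mulVec (V.mulVec γ) ⬝ᵥ V.mulVec γ = (W *ᵥ γ) ⬝ᵥ γ := by
    intro γ
    rw [Matrix.mulVec_mulVec]
    rw [show (B * V) *ᵥ γ ⬝ᵥ V *ᵥ γ = ((B*V) *ᵥ γ) ᵥ* V ⬝ᵥ γ from Matrix.dotProduct_mulVec _ _ _]
    have e1 : ((B*V) *ᵥ γ) ᵥ* V = W *ᵥ γ := by
      rw [← hVsym, Matrix.vecMul_transpose, Matrix.mulVec_mulVec, hVsym, hW, Matrix.mul_assoc]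
    rw [e1]
  rcases Nat.eq_zero_or_pos p with hp | hp
  · -- degenerate case p = 0
    subst hp
    have hempty : {γ : Fin 0 → ℝ | |B.mulVec (V.mulVec γ) ⬝ᵥ V.mulVec γ - pbar| ≥ z} = ∅ := by
      ext γ
      simp only [Set.mem_setOf_eq, Set.mem_empty_iff_false, iff_false, not_le, ge_iff_le]
      have h1 : B.mulVec (V.mulVec γ) ⬝ᵥ V.mulVec γ = 0 := by
        rw [dotProduct]
        exact Finset.sum_of_isEmpty _
      have h2 : pbar = 0 := by
        rw [hpbar, Matrix.trace]
        exact Finset.sum_of_isEmpty _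
      rw [h1, h2]
      simpa using hz0
    rw [hempty, measure_empty]
    exact bot_le
  -- main case
  set U : Matrix (Fin p) (Fin p) ℝ := (hWH.eigenvectorUnitary : Matrix (Fin p) (Fin p) ℝ)
    with hUdef
  set d : Fin p → ℝ := hWH.eigenvalues with hddef
  have h1 : W = U * Matrix.diagonal d * Uᵀ := by
    have := hWH.spectral_theorem
    rwa [Unitary.conjStarAlgAut_apply, show star (hWH.eigenvectorUnitary : Matrix (Fin p) (Fin p) ℝ) = Uᵀ from rfl,
      show (RCLike.ofReal ∘ hWH.eigenvalues : Fin p → ℝ) = d from rfl] at this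
  have hU1 : Uᵀ * U = 1 := by
    have := (Matrix.mem_unitaryGroup_iff').mp hWH.eigenvectorUnitary.2
    exact this
  have hU2 : U * Uᵀ = 1 := by
    have := (Matrix.mem_unitaryGroup_iff).mp hWH.eigenvectorUnitary.2
    exact this
  have htrace : W.trace = ∑ i, d i := by
    rw [h1, Matrix.trace_mul_comm, ← Matrix.mul_assoc, hU1, Matrix.one_mul,
      Matrix.trace_diagonal]
  have htrace2 : (W^2).trace = ∑ i, d i ^ 2 := by
    rw [pow_two, h1]
    have : U * Matrix.diagonal d * Uᵀ * (U * Matrix.diagonal d * Uᵀ)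
        = U * (Matrix.diagonal d * Matrix.diagonal d) * Uᵀ := by
      simp only [Matrix.mul_assoc]
      rw [← Matrix.mul_assoc Uᵀ U, hU1, Matrix.one_mul]
    rw [this, Matrix.trace_mul_comm, ← Matrix.mul_assoc, hU1, Matrix.one_mul,
      Matrix.diagonal_mul_diagonal, Matrix.trace_diagonal]
    exact Finset.sum_congr rfl (fun i _ => (sq (d i)).symm)
  have hq : ∀ γ : Fin p → ℝ, (W *ᵥ γ) ⬝ᵥ γ = ∑ i, d i * ((Uᵀ *ᵥ γ) i)^2 := by
    intro γ
    set η := Uᵀ *ᵥ γ with hη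
    have e1 : W *ᵥ γ = U *ᵥ ((Matrix.diagonal d) *ᵥ η) := by
      rw [h1, ← Matrix.mulVec_mulVec, ← Matrix.mulVec_mulVec]
    have e2 : γ ᵥ* U = η := by
      rw [hη, ← Matrix.vecMul_transpose, Matrix.transpose_transpose]
    rw [e1, dotProduct_comm, Matrix.dotProduct_mulVec, e2]
    have hdiag : (Matrix.diagonal d) *ᵥ η = fun i => d i * η i :=
      funext fun i => by simp [Matrix.mulVec_diagonal]
    rw [hdiag, dotProduct]
    exact Finset.sum_congr rfl fun i _ => by rw [sq]; ring
  have habs : ∀ i, |d i| ≤ lam := by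
    intro i
    rw [hlam]
    exact aux_eigen_norm_bound hp W hWH i
  -- rewrite the event
  have hT : MeasurableSet {x : Fin p → ℝ | z ≤ |(∑ i, d i * x i ^ 2) - ∑ i, d i|} := by
    have hXm : Measurable fun x : Fin p → ℝ => |(∑ i, d i * x i ^ 2) - ∑ i, d i| := by
      apply Measurable.abs
      apply Measurable.sub _ measurable_const
      exact Finset.measurable_sum _ (fun i _ =>
        (measurable_const.mul ((measurable_pi_apply i).pow_const 2)))
    exact measurableSet_le measurable_const hXm
  have hset : {γ : Fin p → ℝ | |B.mulVec (V.mulVec γ) ⬝ᵥ V.mulVec γ - pbar| ≥ z}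
      = (fun γ => Uᵀ *ᵥ γ) ⁻¹' {x | z ≤ |(∑ i, d i * x i ^ 2) - ∑ i, d i|} := by
    ext γ
    simp only [Set.mem_setOf_eq, Set.mem_preimage, ge_iff_le]
    rw [hquad γ, hq γ, hpbar, htrace]
  have hMorth : (Uᵀ)ᵀ * Uᵀ = 1 := by
    rw [Matrix.transpose_transpose]
    exact hU2
  rw [hset, aux_stdGaussian_orth_inv hMorth hT]
  -- trace facts
  have htrnn : (0:ℝ) ≤ (W^2).trace := by
    rw [htrace2]
    exact Finset.sum_nonneg (fun i _ => sq_nonneg _)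
  have hv2 : v^2 = ∑ i, d i ^ 2 := by
    rw [hv, Real.sq_sqrt htrnn, htrace2]
  rcases eq_or_lt_of_le hv0 with hveq | hvpos
  · -- v = 0: all eigenvalues vanish
    have hsum0 : ∑ i, d i ^ 2 = 0 := by rw [← hv2, ← hveq]; norm_num
    have hd0 : ∀ i, d i = 0 := by
      intro i
      have h := (Finset.sum_eq_zero_iff_of_nonneg
        (fun j (_ : j ∈ Finset.univ) => sq_nonneg (d j))).1 hsum0 i (Finset.mem_univ i)
      exact pow_eq_zero_iff (by norm_num) |>.1 h
    have hTempty : {x : Fin p → ℝ | z ≤ |(∑ i, d i * x i ^ 2) - ∑ i, d i|} = ∅ := by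
      ext x
      simp only [Set.mem_setOf_eq, Set.mem_empty_iff_false, iff_false, not_le]
      have e1 : ∑ i, d i * x i ^ 2 = 0 := Finset.sum_eq_zero (fun i _ => by rw [hd0 i]; ring)
      have e2 : ∑ i, d i = 0 := Finset.sum_eq_zero (fun i _ => hd0 i)
      rw [e1, e2]
      simpa using hz0
    rw [hTempty, measure_empty]
    exact bot_le
  · have := aux_chi_tail d lam v z hlam0 habs hv2 hvpos hz0
    refine le_trans this (le_of_eq ?_)
    congr 2
    rw [div_pow, neg_div]
end

section
/- Let ξ ~ N(0, V²) in R^p, B symmetric positive semidefinite, W = V B V trace class with p̄ = tr W, v² = tr W². Then for every x ≥ 0: P(⟨Bξ,ξ⟩ − p̄ < −2v√x) ≤ e^{−x}. -/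
open MeasureTheory ProbabilityTheory Matrix
open scoped ENNReal

lemma lintegral_pi_prod' {n : ℕ} (μ : Measure ℝ) [SigmaFinite μ] (f : Fin n → ℝ → ℝ≥0∞)
    (hf : ∀ i, Measurable (f i)) :
    ∫⁻ x, ∏ i, f i (x i) ∂(Measure.pi fun _ => μ) = ∏ i, ∫⁻ y, f i y ∂μ := by
  induction n with
  | zero => simp [lintegral_const, Measure.pi_univ]
  | succ n ih =>
    rw [MeasurePreserving.lintegral_map_equiv _ (MeasurableEquiv.piFinSuccAbove (fun _ => ℝ) 0).symm
      ((measurePreserving_piFinSuccAbove (fun _ : Fin (n+1) => μ) 0).symm)]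
    simp only [MeasurableEquiv.piFinSuccAbove_symm_apply, Fin.insertNthEquiv,
      Fin.prod_univ_succ, Fin.insertNth_zero, Equiv.coe_fn_mk, Fin.zero_succAbove, Fin.cons_zero,
      Fin.cons_succ, cast_eq]
    rw [lintegral_prod_mul (f := fun y => f 0 y) (g := fun y : Fin n → ℝ => ∏ x : Fin n, f x.succ (y x))
      (hf 0).aemeasurable
      ((Finset.measurable_prod _ (fun j _ => (hf j.succ).comp (measurable_pi_apply j))).aemeasurable),
      ih (fun j => f j.succ) (fun j => hf j.succ)]

lemma stdGaussian_eq (p : ℕ) :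
    stdGaussian p = (volume : Measure (Fin p → ℝ)).withDensity
      (fun γ => ∏ i, gaussianPDF 0 1 (γ i)) := by
  refine Measure.pi_eq (μ := fun _ : Fin p => gaussianReal 0 1) fun s hs => ?_
  rw [withDensity_apply _ (MeasurableSet.univ_pi hs),
    ← lintegral_indicator (MeasurableSet.univ_pi hs)]
  have h1 : ∀ γ : Fin p → ℝ, (Set.univ.pi s).indicator (fun γ => ∏ i, gaussianPDF 0 1 (γ i)) γ
      = ∏ i, (s i).indicator (gaussianPDF 0 1) (γ i) := by
    intro γ
    by_cases h : γ ∈ Set.univ.pi s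
    · rw [Set.indicator_of_mem h]
      exact Finset.prod_congr rfl fun i _ => (Set.indicator_of_mem (h i trivial) _).symm
    · rw [Set.indicator_of_notMem h]
      simp only [Set.mem_pi, Set.mem_univ, forall_true_left, not_forall] at h
      obtain ⟨i, hi⟩ := h
      exact (Finset.prod_eq_zero (Finset.mem_univ i)
        (by rw [Set.indicator_of_notMem hi])).symm
  simp_rw [h1]
  rw [volume_pi, lintegral_pi_prod' _ _
    (fun i => (measurable_gaussianPDF 0 1).indicator (hs i))]
  exact Finset.prod_congr rfl fun i _ => by
    rw [lintegral_indicator (hs i) _, ← gaussianReal_apply 0 one_ne_zero (s i)]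

lemma stdGaussian_preimage {p : ℕ} {M : Matrix (Fin p) (Fin p) ℝ} (hM : Mᵀ * M = 1)
    {A : Set (Fin p → ℝ)} (hA : MeasurableSet A) :
    stdGaussian p ((fun γ => M *ᵥ γ) ⁻¹' A) = stdGaussian p A := by
  have hTfun : (fun γ : Fin p → ℝ => M *ᵥ γ) = ⇑(Matrix.toLin' M) := by
    funext γ; rw [Matrix.toLin'_apply]
  have hTcont : Continuous fun γ : Fin p → ℝ => M *ᵥ γ := by
    rw [hTfun]; exact LinearMap.continuous_on_pi _
  have hTmeas : Measurable fun γ : Fin p → ℝ => M *ᵥ γ := hTcont.measurable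
  have hdet2 : M.det * M.det = 1 := by
    have := congrArg Matrix.det hM
    rwa [Matrix.det_mul, Matrix.det_transpose, Matrix.det_one] at this
  have hdet : M.det ≠ 0 := by
    intro h; rw [h, mul_zero] at hdet2; exact zero_ne_one hdet2
  have habs : |M.det⁻¹| = 1 := by
    rcases mul_self_eq_one_iff.mp hdet2 with h | h <;> norm_num [h]
  have hnorm : ∀ γ : Fin p → ℝ, (M *ᵥ γ) ⬝ᵥ (M *ᵥ γ) = γ ⬝ᵥ γ := by
    intro γ
    rw [dotProduct_mulVec, ← Matrix.mulVec_transpose, Matrix.mulVec_mulVec, hM, Matrix.one_mulVec]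
  set D : (Fin p → ℝ) → ℝ≥0∞ := fun γ => ∏ i, gaussianPDF 0 1 (γ i) with hD
  have hDg : ∀ γ : Fin p → ℝ, D γ =
      ENNReal.ofReal ((Real.sqrt (2 * Real.pi))⁻¹ ^ p * Real.exp (-(γ ⬝ᵥ γ) / 2)) := by
    intro γ
    rw [hD]
    simp only [gaussianPDF, gaussianPDFReal, NNReal.coe_one, mul_one, sub_zero]
    rw [← ENNReal.ofReal_prod_of_nonneg (fun i _ => by positivity)]
    congr 1
    rw [Finset.prod_mul_distrib, Finset.prod_const, ← Real.exp_sum, Finset.card_univ,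
      Fintype.card_fin]
    congr 1
    rw [dotProduct]
    congr 1
    calc ∑ i, -γ i ^ 2 / 2 = ∑ i, -(γ i * γ i) / 2 := by
          exact Finset.sum_congr rfl fun i _ => by ring
      _ = (∑ i, -(γ i * γ i)) / 2 := by rw [Finset.sum_div]
      _ = -(∑ i, γ i * γ i) / 2 := by rw [Finset.sum_neg_distrib]
  have hDinv : ∀ γ : Fin p → ℝ, D (M *ᵥ γ) = D γ := by
    intro γ; rw [hDg, hDg, hnorm]
  have hDmeas : Measurable D :=
    Finset.measurable_prod _ fun i _ =>
      (measurable_gaussianPDF 0 1).comp (measurable_pi_apply i)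
  rw [stdGaussian_eq, withDensity_apply _ (hTmeas hA), withDensity_apply _ hA,
    ← lintegral_indicator (hTmeas hA), ← lintegral_indicator hA]
  have hind : ∀ γ : Fin p → ℝ,
      ((fun γ : Fin p → ℝ => M *ᵥ γ) ⁻¹' A).indicator D γ = A.indicator D (M *ᵥ γ) := by
    intro γ
    by_cases h : M *ᵥ γ ∈ A
    · rw [Set.indicator_of_mem h, Set.indicator_of_mem (by exact h), hDinv]
    · rw [Set.indicator_of_notMem h, Set.indicator_of_notMem (by exact h)]
  rw [← hD]
  simp_rw [hind]
  calc ∫⁻ γ, A.indicator D (M *ᵥ γ) ∂volume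
      = ∫⁻ y, A.indicator D y ∂(Measure.map (fun γ : Fin p → ℝ => M *ᵥ γ) volume) :=
        (lintegral_map (hDmeas.indicator hA) hTmeas).symm
    _ = ∫⁻ y, A.indicator D y ∂(volume : Measure (Fin p → ℝ)) := by
        rw [hTfun, Real.map_matrix_volume_pi_eq_smul_volume_pi hdet, habs, ENNReal.ofReal_one,
          one_smul]

lemma gaussian_mgf_sq {s : ℝ} (hs : 0 ≤ s) :
    ∫⁻ y, ENNReal.ofReal (Real.exp (-(s * y ^ 2))) ∂(gaussianReal 0 1)
      = ENNReal.ofReal (Real.sqrt (1 + 2 * s)⁻¹) := by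
  have hb : (0:ℝ) < s + 1/2 := by linarith
  have hmeas : Measurable fun y : ℝ => ENNReal.ofReal (Real.exp (-(s * y ^ 2))) := by
    fun_prop
  rw [gaussianReal_of_var_ne_zero 0 one_ne_zero,
    lintegral_withDensity_eq_lintegral_mul _ (measurable_gaussianPDF 0 1) hmeas]
  have h1 : ∀ y : ℝ, (gaussianPDF 0 1 * fun y => ENNReal.ofReal (Real.exp (-(s * y ^ 2)))) y
      = ENNReal.ofReal ((Real.sqrt (2 * Real.pi))⁻¹ * Real.exp (-(s + 1/2) * y ^ 2)) := by
    intro y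
    simp only [Pi.mul_apply, gaussianPDF, gaussianPDFReal, NNReal.coe_one, mul_one, sub_zero]
    rw [← ENNReal.ofReal_mul (by positivity), mul_assoc, ← Real.exp_add]
    congr 2
    ring_nf
  simp_rw [h1]
  rw [← ofReal_integral_eq_lintegral_ofReal
      ((integrable_exp_neg_mul_sq hb).const_mul _)
      (Filter.Eventually.of_forall fun y => by positivity)]
  congr 1
  rw [integral_const_mul, integral_gaussian, ← Real.sqrt_inv, ← Real.sqrt_mul (by positivity)]
  congr 1
  have hπ : Real.pi ≠ 0 := Real.pi_ne_zero
  field_simp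
  ring

lemma exp_le_one_add_two_mul {a : ℝ} (ha : 0 ≤ a) :
    Real.exp (2 * a - 2 * a ^ 2) ≤ 1 + 2 * a := by
  rcases le_or_gt a (1/2) with h | h
  · set y := 2 * a - 2 * a ^ 2 with hy
    have hy0 : 0 ≤ y := by nlinarith
    have hy1 : y ≤ 1/2 := by nlinarith
    have hb := Real.exp_bound (x := y) (by rw [abs_of_nonneg hy0]; linarith) (n := 3) (by norm_num)
    have hsum : ∑ m ∈ Finset.range 3, y ^ m / (Nat.factorial m : ℝ)
        = 1 + y + y ^ 2 / 2 := by
      simp [Finset.sum_range_succ, Nat.factorial]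
    rw [hsum, abs_of_nonneg hy0] at hb
    have hb2 := (abs_le.mp hb).2
    norm_num [Nat.factorial] at hb2
    have hb3 : Real.exp y ≤ 1 + y + y ^ 2 / 2 + y ^ 3 * (2 / 9) := by linarith
    calc Real.exp y ≤ 1 + y + y ^ 2 / 2 + y ^ 3 * (2 / 9) := hb3
    _ ≤ 1 + 2 * a := by rw [hy]; nlinarith
  · have h1 : 2 * a - 2 * a ^ 2 ≤ 1/2 := by nlinarith
    have h2 : Real.exp (2 * a - 2 * a ^ 2) ≤ Real.exp (1/2) := Real.exp_le_exp.mpr h1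
    have h3 : Real.exp (1/2) < 2 := by
      have h4 : Real.exp (1/2) * Real.exp (1/2) = Real.exp 1 := by
        rw [← Real.exp_add]; norm_num
      nlinarith [Real.exp_one_lt_d9, Real.exp_pos (1/2 : ℝ)]
    linarith

lemma sqrt_inv_le_exp {a : ℝ} (ha : 0 ≤ a) :
    Real.sqrt (1 + 2 * a)⁻¹ ≤ Real.exp (a ^ 2 - a) := by
  have key := exp_le_one_add_two_mul ha
  have h2 : (1 + 2 * a)⁻¹ ≤ (Real.exp (2 * a - 2 * a ^ 2))⁻¹ :=
    inv_anti₀ (Real.exp_pos _) key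
  have h3 : (Real.exp (2 * a - 2 * a ^ 2))⁻¹ = Real.exp (2 * a ^ 2 - 2 * a) := by
    rw [← Real.exp_neg]; ring_nf
  have h4 : Real.exp (2 * a ^ 2 - 2 * a) = Real.exp (a ^ 2 - a) * Real.exp (a ^ 2 - a) := by
    rw [← Real.exp_add]; ring_nf
  calc Real.sqrt (1 + 2 * a)⁻¹ ≤ Real.sqrt (Real.exp (2 * a ^ 2 - 2 * a)) :=
        Real.sqrt_le_sqrt (h2.trans_eq h3)
    _ = Real.sqrt (Real.exp (a ^ 2 - a) * Real.exp (a ^ 2 - a)) := by rw [h4]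
    _ = Real.exp (a ^ 2 - a) := Real.sqrt_mul_self (Real.exp_pos _).le

set_option maxHeartbeats 1000000 in
theorem stmt_16 {p : ℕ} (V B W : Matrix (Fin p) (Fin p) ℝ)
    (hV : V.PosSemidef) (hB : B.PosSemidef) (hW : W = V * B * V)
    (pbar v : ℝ) (hpbar : pbar = W.trace) (hv : v = Real.sqrt ((W ^ 2).trace))
    (x : ℝ) (hx : 0 ≤ x) :
    stdGaussian p {γ | B.mulVec (V.mulVec γ) ⬝ᵥ V.mulVec γ - pbar < -(2 * v * Real.sqrt x)}
      ≤ ENNReal.ofReal (Real.exp (-x)) := by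
  classical
  have hVT : Vᵀ = V := by
    rw [← Matrix.conjTranspose_eq_transpose_of_trivial]; exact hV.1
  have hWpsd : W.PosSemidef := by
    rw [hW]
    nth_rewrite 1 [← hV.1]
    exact hB.conjTranspose_mul_mul_same V
  have he : W.IsHermitian := hWpsd.1
  set lam : Fin p → ℝ := he.eigenvalues with hlam
  have hlam0 : ∀ i, 0 ≤ lam i := hWpsd.eigenvalues_nonneg
  set U : Matrix (Fin p) (Fin p) ℝ := (he.eigenvectorUnitary : Matrix (Fin p) (Fin p) ℝ) with hUdef
  obtain ⟨hU1, hU2⟩ := Unitary.mem_iff.mp he.eigenvectorUnitary.2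
  have hspec : W = U * diagonal lam * star U := by
    have h := he.spectral_theorem
    rwa [RCLike.ofReal_real_eq_id, Function.id_comp] at h
  have hsUT : star U = Uᵀ := by
    rw [Matrix.star_eq_conjTranspose, Matrix.conjTranspose_eq_transpose_of_trivial]
  have htr : W.trace = ∑ i, lam i := by
    rw [hspec, Matrix.trace_mul_cycle, hU1, one_mul, Matrix.trace_diagonal]
  have htr2 : (W ^ 2).trace = ∑ i, lam i ^ 2 := by
    have hW2 : W ^ 2 = U * (diagonal lam * (diagonal lam * star U)) := by
      rw [pow_two, hspec]
      simp only [Matrix.mul_assoc]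
      rw [← Matrix.mul_assoc (star U) U, hU1, Matrix.one_mul]
    rw [hW2, ← Matrix.mul_assoc, ← Matrix.mul_assoc, Matrix.trace_mul_cycle, ← Matrix.mul_assoc,
      hU1, one_mul, Matrix.diagonal_mul_diagonal, Matrix.trace_diagonal]
    exact Finset.sum_congr rfl fun i _ => by ring
  have hQ : ∀ γ : Fin p → ℝ, B.mulVec (V.mulVec γ) ⬝ᵥ V.mulVec γ
      = ∑ i, lam i * ((star U *ᵥ γ) i) ^ 2 := by
    intro γ
    have h1 : γ ⬝ᵥ W *ᵥ γ = B *ᵥ (V *ᵥ γ) ⬝ᵥ (V *ᵥ γ) := by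
      rw [hW, ← Matrix.mulVec_mulVec, ← Matrix.mulVec_mulVec, Matrix.dotProduct_mulVec,
        ← Matrix.mulVec_transpose, hVT, dotProduct_comm]
    rw [← h1, hspec, ← Matrix.mulVec_mulVec, ← Matrix.mulVec_mulVec,
      Matrix.dotProduct_mulVec, ← Matrix.mulVec_transpose, ← hsUT, dotProduct]
    exact Finset.sum_congr rfl fun i _ => by rw [Matrix.mulVec_diagonal]; ring
  set c : ℝ := pbar - 2 * v * Real.sqrt x with hc
  have hqmeas : Measurable fun y : Fin p → ℝ => ∑ i, lam i * y i ^ 2 :=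
    Finset.measurable_sum _ fun i _ => ((measurable_pi_apply i).pow_const 2).const_mul _
  have hAmeas : MeasurableSet {y : Fin p → ℝ | ∑ i, lam i * y i ^ 2 < c} :=
    measurableSet_lt hqmeas measurable_const
  have hMt : (star U)ᵀ * (star U) = 1 := by
    rw [hsUT, Matrix.transpose_transpose, ← hsUT]; exact hU2
  have hev : {γ : Fin p → ℝ | B.mulVec (V.mulVec γ) ⬝ᵥ V.mulVec γ - pbar
        < -(2 * v * Real.sqrt x)}
      = (fun γ => star U *ᵥ γ) ⁻¹' {y : Fin p → ℝ | ∑ i, lam i * y i ^ 2 < c} := by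
    ext γ
    simp only [Set.mem_setOf_eq, Set.mem_preimage]
    rw [hQ γ, hc]
    constructor <;> intro h <;> linarith
  rw [hev, stdGaussian_preimage hMt hAmeas]
  by_cases hz : ∀ i, lam i = 0
  · have hpbar0 : pbar = 0 := by rw [hpbar, htr]; simp [hz]
    have hv0 : v = 0 := by rw [hv, htr2]; simp [hz]
    have hAe : {y : Fin p → ℝ | ∑ i, lam i * y i ^ 2 < c} = ∅ := by
      ext y
      simp [hz, hc, hpbar0, hv0]
    rw [hAe, measure_empty]
    exact zero_le
  · have hs2pos : 0 < ∑ i, lam i ^ 2 := by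
      obtain ⟨i, hi⟩ := not_forall.mp hz
      exact Finset.sum_pos' (fun j _ => sq_nonneg _) ⟨i, Finset.mem_univ i, by positivity⟩
    have hvpos : 0 < v := by rw [hv, htr2]; exact Real.sqrt_pos.mpr hs2pos
    have hv2 : v ^ 2 = ∑ i, lam i ^ 2 := by rw [hv, htr2, Real.sq_sqrt hs2pos.le]
    set t : ℝ := Real.sqrt x / v with htdef
    have ht0 : 0 ≤ t := div_nonneg (Real.sqrt_nonneg x) hvpos.le
    have htv : t * v = Real.sqrt x := div_mul_cancel₀ _ hvpos.ne'
    have harg : ∀ y : Fin p → ℝ, -(t * ∑ i, lam i * y i ^ 2)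
        = ∑ i, -(t * lam i * y i ^ 2) := by
      intro y
      rw [Finset.mul_sum, ← Finset.sum_neg_distrib]
      exact Finset.sum_congr rfl fun i _ => by ring
    have hfmeas : Measurable fun y : Fin p → ℝ =>
        ENNReal.ofReal (Real.exp (-(t * ∑ i, lam i * y i ^ 2))) :=
      ((hqmeas.const_mul t).neg.exp).ennreal_ofReal
    set ε : ℝ≥0∞ := ENNReal.ofReal (Real.exp (-(t * c))) with hεdef
    have hεpos : 0 < ε := ENNReal.ofReal_pos.mpr (Real.exp_pos _)
    have hεtop : ε ≠ ⊤ := ENNReal.ofReal_ne_top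
    have hsub : {y : Fin p → ℝ | ∑ i, lam i * y i ^ 2 < c}
        ⊆ {y : Fin p → ℝ | ε ≤ ENNReal.ofReal (Real.exp (-(t * ∑ i, lam i * y i ^ 2)))} := by
      intro y hy
      simp only [Set.mem_setOf_eq] at hy ⊢
      rw [hεdef]
      exact ENNReal.ofReal_le_ofReal (Real.exp_le_exp.mpr (by nlinarith))
    have hmarkov := mul_meas_ge_le_lintegral₀ hfmeas.aemeasurable ε (μ := stdGaussian p)
    have hint : ∫⁻ y, ENNReal.ofReal (Real.exp (-(t * ∑ i, lam i * y i ^ 2))) ∂(stdGaussian p)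
        = ∏ i, ENNReal.ofReal (Real.sqrt (1 + 2 * (t * lam i))⁻¹) := by
      have hfac : ∀ y : Fin p → ℝ,
          ENNReal.ofReal (Real.exp (-(t * ∑ i, lam i * y i ^ 2)))
            = ∏ i, ENNReal.ofReal (Real.exp (-(t * lam i * y i ^ 2))) := by
        intro y
        rw [harg y, Real.exp_sum]
        exact ENNReal.ofReal_prod_of_nonneg (fun i _ => (Real.exp_pos _).le)
      simp_rw [hfac]
      rw [show stdGaussian p = Measure.pi fun _ => gaussianReal 0 1 from rfl,
        lintegral_pi_prod' (gaussianReal 0 1)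
          (fun i y => ENNReal.ofReal (Real.exp (-(t * lam i * y ^ 2))))
          (fun i => by fun_prop)]
      exact Finset.prod_congr rfl fun i _ => by
        have h := gaussian_mgf_sq (s := t * lam i) (mul_nonneg ht0 (hlam0 i))
        simpa using h
    have step1 : stdGaussian p {y : Fin p → ℝ | ∑ i, lam i * y i ^ 2 < c}
        ≤ ε⁻¹ * ∏ i, ENNReal.ofReal (Real.sqrt (1 + 2 * (t * lam i))⁻¹) := by
      calc stdGaussian p {y : Fin p → ℝ | ∑ i, lam i * y i ^ 2 < c}
          ≤ stdGaussian p {y : Fin p → ℝ |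
              ε ≤ ENNReal.ofReal (Real.exp (-(t * ∑ i, lam i * y i ^ 2)))} := measure_mono hsub
        _ = ε⁻¹ * (ε * stdGaussian p {y : Fin p → ℝ |
              ε ≤ ENNReal.ofReal (Real.exp (-(t * ∑ i, lam i * y i ^ 2)))}) := by
            rw [← mul_assoc, ENNReal.inv_mul_cancel hεpos.ne' hεtop, one_mul]
        _ ≤ ε⁻¹ * ∫⁻ y, ENNReal.ofReal (Real.exp (-(t * ∑ i, lam i * y i ^ 2)))
              ∂(stdGaussian p) := mul_le_mul_right hmarkov _
        _ = ε⁻¹ * ∏ i, ENNReal.ofReal (Real.sqrt (1 + 2 * (t * lam i))⁻¹) := by rw [hint]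
    have hεinv : ε⁻¹ = ENNReal.ofReal (Real.exp (t * c)) := by
      rw [hεdef, ← ENNReal.ofReal_inv_of_pos (Real.exp_pos _), ← Real.exp_neg, neg_neg]
    have hreal : Real.exp (t * c) * ∏ i, Real.sqrt (1 + 2 * (t * lam i))⁻¹
        ≤ Real.exp (-x) := by
      have hstep : ∏ i, Real.sqrt (1 + 2 * (t * lam i))⁻¹
          ≤ ∏ i, Real.exp ((t * lam i) ^ 2 - t * lam i) :=
        Finset.prod_le_prod (fun i _ => Real.sqrt_nonneg _)
          (fun i _ => sqrt_inv_le_exp (mul_nonneg ht0 (hlam0 i)))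
      have hexp : ∏ i, Real.exp ((t * lam i) ^ 2 - t * lam i)
          = Real.exp (t ^ 2 * v ^ 2 - t * pbar) := by
        rw [← Real.exp_sum]
        congr 1
        rw [hv2, hpbar, htr, Finset.mul_sum, Finset.mul_sum, ← Finset.sum_sub_distrib]
        exact Finset.sum_congr rfl fun i _ => by ring
      have hx2 : t ^ 2 * v ^ 2 = x := by
        rw [show t ^ 2 * v ^ 2 = (t * v) ^ 2 by ring, htv, Real.sq_sqrt hx]
      have hx3 : t * v * Real.sqrt x = x := by rw [htv, Real.mul_self_sqrt hx]
      calc Real.exp (t * c) * ∏ i, Real.sqrt (1 + 2 * (t * lam i))⁻¹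
          ≤ Real.exp (t * c) * Real.exp (t ^ 2 * v ^ 2 - t * pbar) := by
            rw [← hexp]
            exact mul_le_mul_of_nonneg_left hstep (Real.exp_pos _).le
        _ = Real.exp (t * c + (t ^ 2 * v ^ 2 - t * pbar)) := (Real.exp_add _ _).symm
        _ = Real.exp (-x) := by
            congr 1
            rw [hc]
            linear_combination hx2 - 2 * hx3
    calc stdGaussian p {y : Fin p → ℝ | ∑ i, lam i * y i ^ 2 < c}
        ≤ ε⁻¹ * ∏ i, ENNReal.ofReal (Real.sqrt (1 + 2 * (t * lam i))⁻¹) := step1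
      _ = ENNReal.ofReal (Real.exp (t * c) * ∏ i, Real.sqrt (1 + 2 * (t * lam i))⁻¹) := by
          rw [hεinv, ← ENNReal.ofReal_prod_of_nonneg (fun i _ => Real.sqrt_nonneg _),
            ← ENNReal.ofReal_mul (Real.exp_pos _).le]
      _ ≤ ENNReal.ofReal (Real.exp (-x)) := ENNReal.ofReal_le_ofReal hreal
end
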